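/- Suppose each f_i is L-smooth and convex, client i performs τ_i ≥ 1 local FedLin steps per round with step size η_i = 1/(10Lτ_i), and there is no compression. Then f((1/T)∑_{t=1}^T x̄_t) - f(x*) ≤ (10L/T)(‖x̄₁ - x*‖² - ‖x̄_{T+1} - x*‖²), where x* is a minimizer of f = (1/m)∑f_i. -/

import Mathlib

open Finset intervalIntegral

section helpers
variable {E : Type*} [NormedAddCommGroup E] [InnerProductSpace ℝ E] [CompleteSpace E]

local notation "⟪" a ", " b "⟫" => @inner ℝ _ _ a b

lemma fedlin_hasDerivAt_line (g : E → ℝ) (hg : Differentiable ℝ g) (x v : E) (s : ℝ) :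
    HasDerivAt (fun r : ℝ => g (x + r • v)) ⟪gradient g (x + s • v), v⟫ s := by
  have hgrad := (hg (x + s • v)).hasGradientAt
  have hline : HasDerivAt (fun r : ℝ => x + r • v) v s := by
    simpa using ((hasDerivAt_id s).smul_const v).const_add x
  have := hgrad.hasFDerivAt.comp_hasDerivAt s hline
  simpa [InnerProductSpace.toDual_apply_apply, Function.comp_def] using this

lemma fedlin_convex_lower (g : E → ℝ) (hg : Differentiable ℝ g)
    (hc : ConvexOn ℝ Set.univ g) (x y : E) :
    g x + ⟪gradient g x, y - x⟫ ≤ g y := by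
  have hφ : ConvexOn ℝ Set.univ (fun r : ℝ => g (x + r • (y - x))) := by
    have h := hc.comp_affineMap (AffineMap.lineMap x y)
    have : (g ∘ AffineMap.lineMap x y) = fun r : ℝ => g (x + r • (y - x)) := by
      funext r
      simp [AffineMap.lineMap_apply, Function.comp, add_comm]
    rw [this] at h
    simpa using h
  have hD : HasDerivAt (fun r : ℝ => g (x + r • (y - x))) ⟪gradient g x, y - x⟫ 0 := by
    simpa using fedlin_hasDerivAt_line g hg x (y - x) 0
  have hs := hφ.le_slope_of_hasDerivAt (Set.mem_univ (0:ℝ)) (Set.mem_univ (1:ℝ)) one_pos hD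
  simp [slope_def_field] at hs
  simpa using by linarith [hs]


lemma fedlin_hasDerivAt_line' (g : E → ℝ) (hg : Differentiable ℝ g) (x v : E) (s : ℝ) :
    HasDerivAt (fun r : ℝ => g (x + r • v)) ⟪gradient g (x + s • v), v⟫ s := by
  have hgrad := (hg (x + s • v)).hasGradientAt
  have hline : HasDerivAt (fun r : ℝ => x + r • v) v s := by
    simpa using ((hasDerivAt_id s).smul_const v).const_add x
  have := hgrad.hasFDerivAt.comp_hasDerivAt s hline
  simpa [InnerProductSpace.toDual_apply_apply, Function.comp_def] using this

lemma fedlin_smooth_upper (g : E → ℝ) (hg : Differentiable ℝ g) (L : ℝ) (hL : 0 < L)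
    (hlip : ∀ a b : E, ‖gradient g a - gradient g b‖ ≤ L * ‖a - b‖) (x y : E) :
    g y ≤ g x + ⟪gradient g x, y - x⟫ + L / 2 * ‖y - x‖ ^ 2 := by
  set v := y - x with hv
  have hgc : Continuous (gradient g) := by
    have : LipschitzWith L.toNNReal (gradient g) := by
      apply LipschitzWith.of_dist_le_mul
      intro a b
      rw [dist_eq_norm, dist_eq_norm]
      simpa [Real.coe_toNNReal L hL.le] using hlip a b
    exact this.continuous
  set D : ℝ → ℝ := fun r => ⟪gradient g (x + r • v), v⟫ with hD
  have hDc : Continuous D := by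
    apply Continuous.inner
    · exact hgc.comp (by continuity)
    · exact continuous_const
  have hderiv : ∀ r ∈ Set.uIcc (0:ℝ) 1, HasDerivAt (fun r : ℝ => g (x + r • v)) (D r) r :=
    fun r _ => fedlin_hasDerivAt_line' g hg x v r
  have hftc : ∫ r in (0:ℝ)..1, D r = g (x + (1:ℝ) • v) - g (x + (0:ℝ) • v) := by
    simpa using integral_eq_sub_of_hasDerivAt hderiv (hDc.intervalIntegrable 0 1)
  have hbound : ∀ r ∈ Set.Icc (0:ℝ) 1, D r ≤ D 0 + L * r * ‖v‖ ^ 2 := by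
    intro r hr
    have : D r - D 0 = ⟪gradient g (x + r • v) - gradient g x, v⟫ := by
      simp [hD, inner_sub_left]
    have hle : ⟪gradient g (x + r • v) - gradient g x, v⟫ ≤ L * r * ‖v‖ ^ 2 := by
      calc ⟪gradient g (x + r • v) - gradient g x, v⟫
          ≤ ‖gradient g (x + r • v) - gradient g x‖ * ‖v‖ := real_inner_le_norm _ _
        _ ≤ (L * ‖(x + r • v) - x‖) * ‖v‖ := by
            apply mul_le_mul_of_nonneg_right (hlip _ _) (norm_nonneg _)
        _ = L * r * ‖v‖ ^ 2 := by
            rw [show (x + r • v) - x = r • v by abel, norm_smul]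
            simp [abs_of_nonneg hr.1]; ring
    linarith [this ▸ hle]
  have hint2 : IntervalIntegrable (fun r => D 0 + L * r * ‖v‖ ^ 2) MeasureTheory.volume 0 1 := by
    apply Continuous.intervalIntegrable; continuity
  have hmono := integral_mono_on (by norm_num : (0:ℝ) ≤ 1) (hDc.intervalIntegrable 0 1) hint2 hbound
  have hval : ∫ r in (0:ℝ)..1, (D 0 + L * r * ‖v‖ ^ 2) = D 0 + L / 2 * ‖v‖ ^ 2 := by
    have h1 : (fun r : ℝ => D 0 + L * r * ‖v‖ ^ 2) = fun r : ℝ => D 0 + (L * ‖v‖ ^ 2) * r := by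
      funext r; ring
    have h2 : IntervalIntegrable (fun r : ℝ => L * ‖v‖ ^ 2 * r) MeasureTheory.volume 0 1 :=
      (by continuity : Continuous fun r : ℝ => L * ‖v‖ ^ 2 * r).intervalIntegrable 0 1
    rw [h1, integral_add intervalIntegrable_const h2, integral_const_mul, integral_id]
    simp; ring
  have hD0 : D 0 = ⟪gradient g x, v⟫ := by simp [hD]
  have h1v : g (x + (1:ℝ) • v) = g y := by rw [one_smul, hv]; congr 1; abel
  have h0v : g (x + (0:ℝ) • v) = g x := by simp
  rw [h1v, h0v] at hftc
  rw [hval, hD0] at hmono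
  linarith [hftc ▸ hmono]


lemma fedlin_gradient_avg {m : ℕ} (f : Fin m → E → ℝ) (F : E → ℝ)
    (hF : ∀ z, F z = (1 / (m : ℝ)) * ∑ i, f i z)
    (hdiff : ∀ i, Differentiable ℝ (f i)) (z : E) :
    HasGradientAt F ((1 / (m : ℝ)) • ∑ i, gradient (f i) z) z := by
  have hsum : HasFDerivAt (fun w => ∑ i, f i w)
      (∑ i, InnerProductSpace.toDual ℝ E (gradient (f i) z)) z :=
    HasFDerivAt.fun_sum (fun i _ => ((hdiff i z).hasGradientAt).hasFDerivAt)
  have hmul := hsum.const_mul (1 / (m : ℝ))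
  have hFeq : F = fun w => (1 / (m : ℝ)) * ∑ i, f i w := funext hF
  rw [hasGradientAt_iff_hasFDerivAt]
  have htd : (InnerProductSpace.toDual ℝ E) ((1 / (m : ℝ)) • ∑ i, gradient (f i) z)
      = (1 / (m : ℝ)) • ∑ i, (InnerProductSpace.toDual ℝ E) (gradient (f i) z) := by
    rw [map_smul, map_sum]
  rw [htd, hFeq]
  exact hmul

lemma fedlin_grad_sq_le (F : E → ℝ) (hFd : Differentiable ℝ F) (L : ℝ) (hL : 0 < L)
    (hlip : ∀ a b : E, ‖gradient F a - gradient F b‖ ≤ L * ‖a - b‖)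
    (xstar : E) (hmin : ∀ z, F xstar ≤ F z) (z : E) :
    ‖gradient F z‖ ^ 2 ≤ 2 * L * (F z - F xstar) := by
  set G := gradient F z with hG
  have hup := fedlin_smooth_upper F hFd L hL hlip z (z - (1 / L) • G)
  have h1 : (z - (1 / L) • G) - z = -((1 / L) • G) := by abel
  rw [h1] at hup
  have h2 : ⟪G, -((1 / L) • G)⟫ = -((1 / L) * ‖G‖ ^ 2) := by
    rw [inner_neg_right, real_inner_smul_right, real_inner_self_eq_norm_sq]
  have h3 : ‖-((1 / L) • G)‖ ^ 2 = (1 / L) ^ 2 * ‖G‖ ^ 2 := by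
    rw [norm_neg, norm_smul, Real.norm_eq_abs, abs_of_pos (by positivity : (0:ℝ) < 1 / L)]
    ring
  rw [h2, h3] at hup
  have hmin' := hmin (z - (1 / L) • G)
  have key : 1 / (2 * L) * ‖G‖ ^ 2 ≤ F z - F xstar := by
    have hc := le_trans hmin' hup
    have hcomb : F z + -(1 / L * ‖G‖ ^ 2) + L / 2 * ((1 / L) ^ 2 * ‖G‖ ^ 2)
        = F z - 1 / (2 * L) * ‖G‖ ^ 2 := by field_simp; ring
    linarith [hcomb ▸ hc]
  have h2L : (0:ℝ) < 2 * L := by linarith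
  calc ‖G‖ ^ 2 = (2 * L) * (1 / (2 * L) * ‖G‖ ^ 2) := by field_simp
    _ ≤ (2 * L) * (F z - F xstar) := mul_le_mul_of_nonneg_left key h2L.le
    _ = 2 * L * (F z - F xstar) := by ring

end helpers

local notation "⟪" a ", " b "⟫" => @inner ℝ _ _ a b

set_option maxHeartbeats 2000000 in
/-- Theorem 4 (convex case with systems heterogeneity), first part: FedLin with
client-specific numbers of local steps `τᵢ ≥ 1` and step sizes `ηᵢ = 1/(10Lτᵢ)`
achieves an `O(1/T)` rate on the averaged iterate. -/
theorem fedlin_convergence_convex_systems_heterogeneity {d m : ℕ} (hm : 0 < m)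
    (f : Fin m → EuclideanSpace ℝ (Fin d) → ℝ)
    (F : EuclideanSpace ℝ (Fin d) → ℝ)
    (hF : ∀ z, F z = (1 / (m : ℝ)) * ∑ i, f i z)
    (L : ℝ) (hL : 0 < L)
    (hdiff : ∀ i, Differentiable ℝ (f i))
    (hsmooth : ∀ i, LipschitzWith L.toNNReal (gradient (f i)))
    (hconv : ∀ i, ConvexOn ℝ Set.univ (f i))
    (τ : Fin m → ℕ) (hτ : ∀ i, 1 ≤ τ i)
    (η : Fin m → ℝ) (hη : ∀ i, η i = 1 / (10 * L * (τ i : ℝ)))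
    (xbar : ℕ → EuclideanSpace ℝ (Fin d))
    (x : ℕ → Fin m → ℕ → EuclideanSpace ℝ (Fin d))
    (hx0 : ∀ t, 1 ≤ t → ∀ i, x t i 0 = xbar t)
    (hrec : ∀ t, 1 ≤ t → ∀ i, ∀ ℓ < τ i, x t i (ℓ + 1) =
      x t i ℓ - η i • (gradient (f i) (x t i ℓ) - gradient (f i) (xbar t)
        + gradient F (xbar t)))
    (havg : ∀ t, 1 ≤ t → xbar (t + 1) = (1 / (m : ℝ)) • ∑ i, x t i (τ i))
    (xstar : EuclideanSpace ℝ (Fin d)) (hmin : ∀ z, F xstar ≤ F z)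
    (T : ℕ) (hT : 1 ≤ T) :
    F ((1 / (T : ℝ)) • ∑ t ∈ Finset.Icc 1 T, xbar t) - F xstar ≤
      (10 * L / (T : ℝ)) * (‖xbar 1 - xstar‖ ^ 2 - ‖xbar (T + 1) - xstar‖ ^ 2) := by
  have hm' : (0:ℝ) < m := by exact_mod_cast hm
  -- gradient of F
  have hgradF : ∀ z, gradient F z = (1/(m:ℝ)) • ∑ i, gradient (f i) z :=
    fun z => (fedlin_gradient_avg f F hF hdiff z).gradient
  have hFdiff : Differentiable ℝ F :=
    fun z => (fedlin_gradient_avg f F hF hdiff z).differentiableAt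
  -- Lipschitz gradients in norm form
  have hLi : ∀ i (a b : EuclideanSpace ℝ (Fin d)),
      ‖gradient (f i) a - gradient (f i) b‖ ≤ L * ‖a - b‖ := by
    intro i a b
    have := (hsmooth i).dist_le_mul a b
    rwa [dist_eq_norm, dist_eq_norm, Real.coe_toNNReal L hL.le] at this
  have hFlip : ∀ a b : EuclideanSpace ℝ (Fin d),
      ‖gradient F a - gradient F b‖ ≤ L * ‖a - b‖ := by
    intro a b
    rw [hgradF a, hgradF b, ← smul_sub, ← Finset.sum_sub_distrib]
    rw [norm_smul, Real.norm_eq_abs, abs_of_pos (by positivity : (0:ℝ) < 1/(m:ℝ))]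
    calc 1/(m:ℝ) * ‖∑ i, (gradient (f i) a - gradient (f i) b)‖
        ≤ 1/(m:ℝ) * ∑ i, ‖gradient (f i) a - gradient (f i) b‖ := by
          apply mul_le_mul_of_nonneg_left (norm_sum_le _ _) (by positivity)
      _ ≤ 1/(m:ℝ) * ∑ _i : Fin m, L * ‖a - b‖ := by
          apply mul_le_mul_of_nonneg_left (Finset.sum_le_sum fun i _ => hLi i a b) (by positivity)
      _ = L * ‖a - b‖ := by
          rw [Finset.sum_const, Finset.card_univ, Fintype.card_fin, nsmul_eq_mul]
          field_simp
  have hGsq : ∀ z, ‖gradient F z‖^2 ≤ 2*L*(F z - F xstar) :=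
    fedlin_grad_sq_le F hFdiff L hL hFlip xstar hmin
  -- convexity of F
  have hFconv : ConvexOn ℝ Set.univ F := by
    have hs : ∀ s : Finset (Fin m), ConvexOn ℝ Set.univ (fun z => ∑ i ∈ s, f i z) := by
      intro s
      induction s using Finset.induction with
      | empty => simpa using convexOn_const (0:ℝ) convex_univ
      | insert _ _ h ih => simp only [Finset.sum_insert h]; exact (hconv _).add ih
    have := ((hs Finset.univ).smul (by positivity : (0:ℝ) ≤ 1/(m:ℝ)))
    have heq : (fun z => (1/(m:ℝ)) • ∑ i, f i z) = F := by
      funext z; rw [hF z]; simp [smul_eq_mul]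
    rwa [heq] at this
  have hlowF : ∀ a c : EuclideanSpace ℝ (Fin d), F a + ⟪gradient F a, c - a⟫ ≤ F c :=
    fedlin_convex_lower F hFdiff hFconv
  -- step sizes
  have hτpos : ∀ i, (0:ℝ) < τ i := fun i => by exact_mod_cast hτ i
  have hηpos : ∀ i, 0 < η i := fun i => by
    rw [hη i]; exact div_pos one_pos (mul_pos (by linarith) (hτpos i))
  set ηb : ℝ := 1/(10*L) with hηb
  have hηbpos : 0 < ηb := by rw [hηb]; positivity
  have hLηb : L * ηb = 1/10 := by rw [hηb]; field_simp
  have hητ : ∀ i, η i * τ i = ηb := by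
    intro i; have h1 := (hτpos i).ne'; rw [hη i, hηb]; field_simp
  have hηL : ∀ i, η i * L * τ i = 1/10 := by
    intro i; have h1 := (hτpos i).ne'; rw [hη i]; field_simp
  -- KEY per-round inequality
  have key : ∀ t, 1 ≤ t → F (xbar t) - F xstar ≤
      10*L*(‖xbar t - xstar‖^2 - ‖xbar (t+1) - xstar‖^2) := by
    intro t ht
    set b := xbar t with hb
    set G := gradient F b with hG
    set p := b - xstar with hp
    set h : Fin m → ℕ → EuclideanSpace ℝ (Fin d) :=
      fun i ℓ => gradient (f i) (x t i ℓ) - gradient (f i) b + G with hh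
    -- closed form
    have hclosed : ∀ i, ∀ ℓ, ℓ ≤ τ i →
        x t i ℓ = b - η i • ∑ j ∈ Finset.range ℓ, h i j := by
      intro i ℓ
      induction ℓ with
      | zero => intro _; simp [hx0 t ht i, hb]
      | succ ℓ ih =>
        intro hle
        have hfold : gradient (f i) (x t i ℓ) - gradient (f i) b + G = h i ℓ := rfl
        rw [hrec t ht i ℓ (by omega), hfold, ih (by omega), Finset.sum_range_succ, smul_add]
        simp only [hh, smul_add]
        abel
    -- drift bound
    have hdrift : ∀ i, ∀ ℓ, ℓ ≤ τ i → ‖x t i ℓ - b‖ ≤ 3 * (η i * ℓ) * ‖G‖ := by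
      intro i ℓ
      induction ℓ with
      | zero => intro _; simp [hx0 t ht i, hb]
      | succ ℓ ih =>
        intro hle
        have hih := ih (by omega)
        have hxrec := hrec t ht i ℓ (by omega)
        have hhn : ‖h i ℓ‖ ≤ L * ‖x t i ℓ - b‖ + ‖G‖ := by
          rw [hh]
          calc ‖gradient (f i) (x t i ℓ) - gradient (f i) b + G‖
              ≤ ‖gradient (f i) (x t i ℓ) - gradient (f i) b‖ + ‖G‖ := norm_add_le _ _
            _ ≤ L * ‖x t i ℓ - b‖ + ‖G‖ := by
                have := hLi i (x t i ℓ) b; linarith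
        have hstep : ‖x t i (ℓ+1) - b‖ ≤ ‖x t i ℓ - b‖ + η i * ‖h i ℓ‖ := by
          have hfold : gradient (f i) (x t i ℓ) - gradient (f i) b + G = h i ℓ := rfl
          rw [hxrec, hfold]
          calc ‖x t i ℓ - η i • h i ℓ - b‖ = ‖(x t i ℓ - b) - η i • h i ℓ‖ := by abel_nf
            _ ≤ ‖x t i ℓ - b‖ + ‖η i • h i ℓ‖ := norm_sub_le _ _
            _ = ‖x t i ℓ - b‖ + η i * ‖h i ℓ‖ := by
                rw [norm_smul, Real.norm_eq_abs, abs_of_pos (hηpos i)]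
        have hcast : ((ℓ:ℝ)) ≤ (τ i : ℝ) := by exact_mod_cast (by omega : ℓ ≤ τ i)
        have hfrac : η i * L * ℓ ≤ 1/10 := by
          have h1 : η i * L * ℓ ≤ η i * L * τ i :=
            mul_le_mul_of_nonneg_left hcast (mul_nonneg (hηpos i).le hL.le)
          linarith [hηL i]
        have hG0 : (0:ℝ) ≤ ‖G‖ := norm_nonneg _
        have hD0 : (0:ℝ) ≤ ‖x t i ℓ - b‖ := norm_nonneg _
        push_cast
        nlinarith [mul_le_mul_of_nonneg_left hih (mul_nonneg (hηpos i).le hL.le),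
          mul_le_mul_of_nonneg_right hfrac (mul_nonneg (mul_nonneg (by norm_num : (0:ℝ) ≤ 3) (hηpos i).le) hG0),
          (hηpos i).le, hL.le, hstep, hhn,
          mul_le_mul_of_nonneg_left hhn (hηpos i).le]
    -- drift at scale ηb
    have hdrift2 : ∀ i, ∀ ℓ, ℓ ≤ τ i → ‖x t i ℓ - b‖ ≤ 3 * ηb * ‖G‖ := by
      intro i ℓ hle
      refine (hdrift i ℓ hle).trans ?_
      have h1 : η i * ℓ ≤ ηb := by
        have h2 : η i * ℓ ≤ η i * τ i :=
          mul_le_mul_of_nonneg_left (by exact_mod_cast hle) (hηpos i).le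
        linarith [hητ i]
      nlinarith [norm_nonneg G, h1]
    -- norm of local correction terms
    have hhnorm : ∀ i, ∀ ℓ, ℓ ≤ τ i → ‖h i ℓ‖ ≤ (13/10) * ‖G‖ := by
      intro i ℓ hle
      have h1 : ‖h i ℓ‖ ≤ L * ‖x t i ℓ - b‖ + ‖G‖ := by
        simp only [hh]
        calc ‖gradient (f i) (x t i ℓ) - gradient (f i) b + G‖
            ≤ ‖gradient (f i) (x t i ℓ) - gradient (f i) b‖ + ‖G‖ := norm_add_le _ _
          _ ≤ L * ‖x t i ℓ - b‖ + ‖G‖ := by have := hLi i (x t i ℓ) b; linarith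
      have h2 := hdrift2 i ℓ hle
      have h3 : L * ‖x t i ℓ - b‖ ≤ L * (3 * ηb * ‖G‖) := mul_le_mul_of_nonneg_left h2 hL.le
      have h4 : L * (3 * ηb * ‖G‖) = (3/10) * ‖G‖ := by rw [hηb]; field_simp
      linarith
    set S : Fin m → EuclideanSpace ℝ (Fin d) := fun i => ∑ j ∈ Finset.range (τ i), h i j with hS
    set e : EuclideanSpace ℝ (Fin d) := (1/(m:ℝ)) • ∑ i, η i • S i with heq
    have hxτ : ∀ i, x t i (τ i) = b - η i • S i := fun i => hclosed i (τ i) le_rfl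
    have hbar : xbar (t+1) = b - e := by
      rw [havg t ht]
      simp only [hxτ]
      rw [Finset.sum_sub_distrib, smul_sub, Finset.sum_const, Finset.card_univ,
        Fintype.card_fin, heq]
      congr 1
      rw [← Nat.cast_smul_eq_nsmul ℝ, smul_smul, one_div, inv_mul_cancel₀ hm'.ne', one_smul]
    have hSnorm : ∀ i, ‖S i‖ ≤ (τ i : ℝ) * ((13/10) * ‖G‖) := by
      intro i
      simp only [hS]
      refine (norm_sum_le _ _).trans ?_
      calc ∑ j ∈ Finset.range (τ i), ‖h i j‖
          ≤ ∑ _j ∈ Finset.range (τ i), (13/10) * ‖G‖ :=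
            Finset.sum_le_sum fun j hj => hhnorm i j (Finset.mem_range.mp hj).le
        _ = (τ i : ℝ) * ((13/10) * ‖G‖) := by
            rw [Finset.sum_const, Finset.card_range, nsmul_eq_mul]
    have henorm : ‖e‖ ≤ (13/10) * ηb * ‖G‖ := by
      rw [heq, norm_smul, Real.norm_eq_abs, abs_of_pos (by positivity : (0:ℝ) < 1/(m:ℝ))]
      have h1 : ‖∑ i, η i • S i‖ ≤ ∑ i : Fin m, η i * ((τ i:ℝ) * ((13/10) * ‖G‖)) := by
        refine (norm_sum_le _ _).trans (Finset.sum_le_sum fun i _ => ?_)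
        rw [norm_smul, Real.norm_eq_abs, abs_of_pos (hηpos i)]
        exact mul_le_mul_of_nonneg_left (hSnorm i) (hηpos i).le
      have h2 : ∀ i : Fin m, η i * ((τ i:ℝ) * ((13/10) * ‖G‖)) = ηb * ((13/10) * ‖G‖) := by
        intro i; rw [← hητ i]; ring
      calc (1/(m:ℝ)) * ‖∑ i, η i • S i‖
          ≤ (1/(m:ℝ)) * ∑ i : Fin m, η i * ((τ i:ℝ) * ((13/10) * ‖G‖)) :=
            mul_le_mul_of_nonneg_left h1 (by positivity)
        _ = (1/(m:ℝ)) * ((m:ℝ) * (ηb * ((13/10) * ‖G‖))) := by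
            rw [Finset.sum_congr rfl (fun i _ => h2 i), Finset.sum_const, Finset.card_univ,
              Fintype.card_fin, nsmul_eq_mul]
        _ = (13/10) * ηb * ‖G‖ := by field_simp
    -- inner product lower bound
    set Ci : Fin m → ℝ := fun i => (f i b - f i xstar) + (⟪G, p⟫ - ⟪gradient (f i) b, p⟫)
      - L/2*(3*ηb*‖G‖)^2 with hCi
    have hij : ∀ i, ∀ j, j ≤ τ i → Ci i ≤ ⟪h i j, p⟫ := by
      intro i j hj
      have h1 := fedlin_smooth_upper (f i) (hdiff i) L hL (hLi i) (x t i j) b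
      have h2 := fedlin_convex_lower (f i) (hdiff i) (hconv i) (x t i j) xstar
      have h3 : ⟪h i j, p⟫ = ⟪gradient (f i) (x t i j), b - x t i j⟫
          + ⟪gradient (f i) (x t i j), x t i j - xstar⟫
          + (⟪G, p⟫ - ⟪gradient (f i) b, p⟫) := by
        simp only [hh, hp, inner_add_left, inner_sub_left, inner_sub_right]
        ring
      have h4 : ⟪gradient (f i) (x t i j), xstar - x t i j⟫
          = -⟪gradient (f i) (x t i j), x t i j - xstar⟫ := by
        rw [show xstar - x t i j = -(x t i j - xstar) from by abel, inner_neg_right]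
      have h5 : ‖b - x t i j‖^2 ≤ (3*ηb*‖G‖)^2 := by
        rw [norm_sub_rev]
        exact pow_le_pow_left₀ (norm_nonneg _) (hdrift2 i j hj) 2
      have h6 : L/2 * ‖b - x t i j‖^2 ≤ L/2 * (3*ηb*‖G‖)^2 :=
        mul_le_mul_of_nonneg_left h5 (by positivity)
      rw [h3]
      rw [h4] at h2
      simp only [hCi]
      linarith
    have hSi : ∀ i, (τ i : ℝ) * Ci i ≤ ⟪S i, p⟫ := by
      intro i
      have h1 : ⟪S i, p⟫ = ∑ j ∈ Finset.range (τ i), ⟪h i j, p⟫ := by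
        simp only [hS]; rw [sum_inner]
      rw [h1]
      have h2 : ∑ _j ∈ Finset.range (τ i), Ci i ≤ ∑ j ∈ Finset.range (τ i), ⟪h i j, p⟫ :=
        Finset.sum_le_sum fun j hj => hij i j (Finset.mem_range.mp hj).le
      rwa [Finset.sum_const, Finset.card_range, nsmul_eq_mul] at h2
    have hep : ⟪e, p⟫ = (1/(m:ℝ)) * ∑ i, η i * ⟪S i, p⟫ := by
      rw [heq, real_inner_smul_left, sum_inner]
      congr 1
      exact Finset.sum_congr rfl fun i _ => real_inner_smul_left _ _ _
    have hterm : ∀ i : Fin m, ηb * Ci i ≤ η i * ⟪S i, p⟫ := by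
      intro i
      have h1 := mul_le_mul_of_nonneg_left (hSi i) (hηpos i).le
      calc ηb * Ci i = η i * ((τ i:ℝ) * Ci i) := by rw [← hητ i]; ring
        _ ≤ η i * ⟪S i, p⟫ := h1
    have hgb : ⟪∑ i, gradient (f i) b, p⟫ = (m:ℝ) * ⟪G, p⟫ := by
      have h1 : G = (1/(m:ℝ)) • ∑ i, gradient (f i) b := by rw [hG, hgradF b]
      have h2 : ⟪G, p⟫ = (1/(m:ℝ)) * ⟪∑ i, gradient (f i) b, p⟫ := by
        rw [h1, real_inner_smul_left]
      rw [h2]; field_simp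
    have hCsum : (1/(m:ℝ)) * ∑ i, Ci i = (F b - F xstar) - L/2*(3*ηb*‖G‖)^2 := by
      have e1 : ∑ i, Ci i
          = (∑ i, f i b) - (∑ i, f i xstar)
            + ((m:ℝ) * ⟪G, p⟫ - ∑ i, ⟪gradient (f i) b, p⟫)
            - (m:ℝ) * (L/2*(3*ηb*‖G‖)^2) := by
        simp only [hCi]
        rw [Finset.sum_sub_distrib, Finset.sum_add_distrib, Finset.sum_sub_distrib,
          Finset.sum_sub_distrib, Finset.sum_const, Finset.sum_const, Finset.card_univ,
          Fintype.card_fin, nsmul_eq_mul, nsmul_eq_mul]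
      rw [e1, ← sum_inner, hgb, hF b, hF xstar]
      field_simp; ring
    have hinner : ηb * ((F b - F xstar) - L/2*(3*ηb*‖G‖)^2) ≤ ⟪e, p⟫ := by
      rw [hep]
      have h1 : ∑ i : Fin m, ηb * Ci i ≤ ∑ i, η i * ⟪S i, p⟫ :=
        Finset.sum_le_sum fun i _ => hterm i
      have h2 := mul_le_mul_of_nonneg_left h1 (by positivity : (0:ℝ) ≤ 1/(m:ℝ))
      have h3 : (1/(m:ℝ)) * ∑ i : Fin m, ηb * Ci i = ηb * ((1/(m:ℝ)) * ∑ i, Ci i) := by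
        rw [← Finset.mul_sum]; ring
      rw [h3, hCsum] at h2
      exact h2
    -- final per-round arithmetic
    have hexp : ‖xbar (t+1) - xstar‖^2 = ‖p‖^2 - 2*⟪e,p⟫ + ‖e‖^2 := by
      rw [hbar, show b - e - xstar = p - e from by rw [hp]; abel]
      rw [norm_sub_sq_real, real_inner_comm p e]
    have hΦ0 : 0 ≤ F b - F xstar := by linarith [hmin b]
    have hg : ‖G‖^2 ≤ 2*L*(F b - F xstar) := by rw [hG]; exact hGsq b
    have hA : ηb * (F b - F xstar) - (9/2)*L*ηb^3*‖G‖^2 ≤ ⟪e,p⟫ := by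
      refine le_trans (le_of_eq ?_) hinner
      ring
    have he2 : ‖e‖^2 ≤ (169/100)*ηb^2*‖G‖^2 := by
      calc ‖e‖^2 ≤ ((13/10)*ηb*‖G‖)^2 := pow_le_pow_left₀ (norm_nonneg _) henorm 2
        _ = (169/100)*ηb^2*‖G‖^2 := by ring
    have hstep1 : ηb * ‖G‖^2 ≤ (1/5) * (F b - F xstar) := by
      have h1 : ηb * ‖G‖^2 ≤ ηb * (2*L*(F b - F xstar)) :=
        mul_le_mul_of_nonneg_left hg hηbpos.le
      have h2 : ηb * (2*L*(F b - F xstar)) = (1/5)*(F b - F xstar) := by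
        rw [hηb]; field_simp; ring
      linarith
    have hA' : (F b - F xstar) - (9/20)*(ηb*‖G‖^2) ≤ 10*L*⟪e,p⟫ := by
      have h1 := mul_le_mul_of_nonneg_left hA (by positivity : (0:ℝ) ≤ 10*L)
      have h2 : 10*L*(ηb * (F b - F xstar) - (9/2)*L*ηb^3*‖G‖^2)
          = (F b - F xstar) - (9/20)*(ηb*‖G‖^2) := by rw [hηb]; field_simp; ring
      linarith
    have hB' : 10*L*‖e‖^2 ≤ (169/100)*(ηb*‖G‖^2) := by
      have h1 := mul_le_mul_of_nonneg_left he2 (by positivity : (0:ℝ) ≤ 10*L)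
      have h2 : 10*L*((169/100)*ηb^2*‖G‖^2) = (169/100)*(ηb*‖G‖^2) := by
        rw [hηb]; field_simp
      linarith
    have hrw : ‖p‖^2 - ‖xbar (t+1) - xstar‖^2 = 2*⟪e,p⟫ - ‖e‖^2 := by
      rw [hexp]; ring
    rw [hrw]
    nlinarith [hA', hB', hstep1, hΦ0]
  -- telescoping
  have htel : ∀ N : ℕ, ∑ t ∈ Finset.Icc 1 N, (‖xbar t - xstar‖^2 - ‖xbar (t+1) - xstar‖^2)
      = ‖xbar 1 - xstar‖^2 - ‖xbar (N+1) - xstar‖^2 := by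
    intro N
    induction N with
    | zero => simp
    | succ N ih =>
      rw [Finset.sum_Icc_succ_top (by omega : 1 ≤ N+1), ih]
      ring
  have hsum : ∑ t ∈ Finset.Icc 1 T, (F (xbar t) - F xstar)
      ≤ 10*L*(‖xbar 1 - xstar‖^2 - ‖xbar (T+1) - xstar‖^2) := by
    calc ∑ t ∈ Finset.Icc 1 T, (F (xbar t) - F xstar)
        ≤ ∑ t ∈ Finset.Icc 1 T, 10*L*(‖xbar t - xstar‖^2 - ‖xbar (t+1) - xstar‖^2) :=
          Finset.sum_le_sum fun t ht' => key t (Finset.mem_Icc.mp ht').1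
      _ = 10*L* ∑ t ∈ Finset.Icc 1 T, (‖xbar t - xstar‖^2 - ‖xbar (t+1) - xstar‖^2) := by
          rw [Finset.mul_sum]
      _ = 10*L*(‖xbar 1 - xstar‖^2 - ‖xbar (T+1) - xstar‖^2) := by rw [htel T]
  -- Jensen via the gradient inequality
  have hT' : (0:ℝ) < T := by exact_mod_cast hT
  set z := (1/(T:ℝ)) • ∑ t ∈ Finset.Icc 1 T, xbar t with hz
  have hzsum : ∑ t ∈ Finset.Icc 1 T, (xbar t - z) = 0 := by
    rw [Finset.sum_sub_distrib, Finset.sum_const, Nat.card_Icc, Nat.add_sub_cancel]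
    rw [hz, ← Nat.cast_smul_eq_nsmul ℝ, smul_smul, mul_one_div, div_self hT'.ne', one_smul,
      sub_self]
  have hjensen : (T:ℝ) * (F z) ≤ ∑ t ∈ Finset.Icc 1 T, F (xbar t) := by
    have h1 : ∀ t ∈ Finset.Icc 1 T, F z + ⟪gradient F z, xbar t - z⟫ ≤ F (xbar t) :=
      fun t _ => hlowF z (xbar t)
    have h2 := Finset.sum_le_sum h1
    rw [Finset.sum_add_distrib, ← inner_sum, hzsum, inner_zero_right, add_zero,
      Finset.sum_const, Nat.card_Icc, Nat.add_sub_cancel, nsmul_eq_mul] at h2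
    exact h2
  have h1 : ∑ t ∈ Finset.Icc 1 T, (F (xbar t) - F xstar)
      = (∑ t ∈ Finset.Icc 1 T, F (xbar t)) - (T:ℝ) * F xstar := by
    rw [Finset.sum_sub_distrib, Finset.sum_const, Nat.card_Icc, Nat.add_sub_cancel, nsmul_eq_mul]
  have hfinal : (T:ℝ) * (F z - F xstar)
      ≤ 10*L*(‖xbar 1 - xstar‖^2 - ‖xbar (T+1) - xstar‖^2) := by
    nlinarith [hsum, hjensen, h1]
  have h2 : F z - F xstar
      ≤ 10*L*(‖xbar 1 - xstar‖^2 - ‖xbar (T+1) - xstar‖^2) / (T:ℝ) := by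
    rw [le_div_iff₀ hT']; linarith [hfinal]
  have h3 : 10*L*(‖xbar 1 - xstar‖^2 - ‖xbar (T+1) - xstar‖^2) / (T:ℝ)
      = (10*L/(T:ℝ)) * (‖xbar 1 - xstar‖^2 - ‖xbar (T+1) - xstar‖^2) := by ring
  linarith [h2, h3]
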